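/- arXiv:1109.4475 — 2 statements merged into one kernel-verified Lean document; each statement's English description precedes it below -/
import Mathlib

section
/- Let G be an undirected graph and let F be a maximal directed forest in the double directed graph of G (i.e., F is a facet of the complex of directed trees of the double direction of G), with roots x_1, ..., x_t. Then {x_1, ..., x_t} is a strongly independent set in G: it is an independent set and the neighborhoods N(x_i) are pairwise disjoint. -/
/-- `IsDipath T a b p` : `p` is the list of successive vertices (after `a`) of a
directed path from `a` to `b` using edges of the relation `T`. -/
def IsDipath {V : Type} (T : V → V → Prop) : V → V → List V → Prop
  | a, b, [] => a = b
  | a, b, c :: p => T a c ∧ IsDipath T c b p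

/-- `T` is a spanning directed rooted tree of the digraph `E` with root `r`:
its edges are edges of `E` and every vertex is reached by a unique directed path from `r`. -/
def IsSpanningDitree {V : Type} (E T : V → V → Prop) (r : V) : Prop :=
  (∀ x y, T x y → E x y) ∧ ∀ x : V, ∃! p : List V, IsDipath T r x p

/-- The edge relation associated to a finite set of directed edges. -/
def edgeRel {V : Type} [DecidableEq V] (F : Finset (V × V)) : V → V → Prop :=
  fun x y => (x, y) ∈ F

/-- A finite set of directed edges is a directed forest in the digraph `E`:
all edges belong to `E`, every vertex has in-degree at most one, and there are
no directed cycles.  (Equivalently, it is a disjoint union of directed rooted trees.) -/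
def IsDirectedForest {V : Type} [DecidableEq V] (E : V → V → Prop) (F : Finset (V × V)) : Prop :=
  (∀ e ∈ F, E e.1 e.2) ∧
  (∀ x y y' : V, (y, x) ∈ F → (y', x) ∈ F → y = y') ∧
  ∀ (x : V) (p : List V), p ≠ [] → ¬ IsDipath (edgeRel F) x x p

/-- A facet of the complex of directed trees `Δ(E)`: a maximal directed forest. -/
def IsFacet {V : Type} [DecidableEq V] (E : V → V → Prop) (F : Finset (V × V)) : Prop :=
  IsDirectedForest E F ∧ ∀ F', IsDirectedForest E F' → F ⊆ F' → F' = F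

lemma dipath_append {V : Type} {T : V → V → Prop} :
    ∀ {p : List V} {a b c : V} {q : List V}, IsDipath T a b p → IsDipath T b c q →
      IsDipath T a c (p ++ q)
  | [], a, b, c, q, hab, hbc => by
      have : a = b := hab
      subst this; exact hbc
  | d :: p, a, b, c, q, hab, hbc => ⟨hab.1, dipath_append hab.2 hbc⟩

lemma dipath_last {V : Type} {T : V → V → Prop} :
    ∀ {p : List V} {a b : V}, IsDipath T a b p → p ≠ [] →
      ∃ (p' : List V) (c : V), IsDipath T a c p' ∧ T c b ∧ p'.length + 1 = p.length
  | [], a, b, h, hne => absurd rfl hne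
  | [d], a, b, h, _ => by
      obtain ⟨h1, h2⟩ := h
      have : d = b := h2
      subst this
      exact ⟨[], a, rfl, h1, rfl⟩
  | d :: e :: p, a, b, h, _ => by
      obtain ⟨h1, h2⟩ := h
      obtain ⟨p', c, hp', hc, hlen⟩ := dipath_last h2 (by simp)
      exact ⟨d :: p', c, ⟨h1, hp'⟩, hc, by simp [← hlen]⟩

lemma dipath_insert {V : Type} [DecidableEq V] {F : Finset (V × V)} {z x : V} :
    ∀ {p : List V} {a b : V}, IsDipath (edgeRel (insert (z, x) F)) a b p →
      IsDipath (edgeRel F) a b p ∨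
      ((∃ q, IsDipath (edgeRel F) a z q) ∧ (∃ r, IsDipath (edgeRel F) x b r))
  | [], a, b, h => Or.inl h
  | c :: p, a, b, h => by
      obtain ⟨h1, h2⟩ := h
      have h1' : (a, c) ∈ insert (z, x) F := h1
      rcases Finset.mem_insert.mp h1' with heq | hmem
      · have ha : a = z := congrArg Prod.fst heq
        have hc : c = x := congrArg Prod.snd heq
        subst ha; subst hc
        rcases dipath_insert h2 with h3 | ⟨_, h4⟩
        · exact Or.inr ⟨⟨[], rfl⟩, ⟨p, h3⟩⟩
        · exact Or.inr ⟨⟨[], rfl⟩, h4⟩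
      · rcases dipath_insert h2 with h3 | ⟨⟨q, hq⟩, h4⟩
        · exact Or.inl ⟨hmem, h3⟩
        · exact Or.inr ⟨⟨c :: q, ⟨hmem, hq⟩⟩, h4⟩

/-- In a graph with in-degree at most one, two roots having dipaths to the same
vertex must be equal. -/
lemma root_unique {V : Type} [DecidableEq V] {F : Finset (V × V)}
    (hdeg : ∀ x y y' : V, (y, x) ∈ F → (y', x) ∈ F → y = y') :
    ∀ (n : ℕ) (p q : List V) (x y z : V), p.length ≤ n →
      (∀ w, (w, x) ∉ F) → (∀ w, (w, y) ∉ F) →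
      IsDipath (edgeRel F) x z p → IsDipath (edgeRel F) y z q → x = y := by
  intro n
  induction n with
  | zero =>
      intro p q x y z hlen hx hy hp hq
      have hpnil : p = [] := List.length_eq_zero_iff.mp (Nat.le_zero.mp hlen)
      subst hpnil
      have hxz : x = z := hp
      subst hxz
      rcases List.eq_nil_or_concat q with hqnil | ⟨q', d, rfl⟩
      · subst hqnil; exact (hq : y = x).symm
      · obtain ⟨q'', c, _, hc, _⟩ := dipath_last hq (by simp)
        exact absurd hc (hx c)
  | succ n ih =>
      intro p q x y z hlen hx hy hp hq
      rcases List.eq_nil_or_concat p with hpnil | ⟨p', d, rfl⟩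
      · subst hpnil
        have hxz : x = z := hp
        subst hxz
        rcases List.eq_nil_or_concat q with hqnil | ⟨q', d, rfl⟩
        · subst hqnil; exact (hq : y = x).symm
        · obtain ⟨q'', c, _, hc, _⟩ := dipath_last hq (by simp)
          exact absurd hc (hx c)
      · rcases List.eq_nil_or_concat q with hqnil | ⟨q', e, rfl⟩
        · subst hqnil
          have hyz : y = z := hq
          subst hyz
          obtain ⟨p'', c, _, hc, _⟩ := dipath_last hp (by simp)
          exact absurd hc (hy c)
        · obtain ⟨p'', c, hp'', hc, hlen1⟩ := dipath_last hp (by simp)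
          obtain ⟨q'', c', hq'', hc', _⟩ := dipath_last hq (by simp)
          have hcc : c = c' := hdeg z c c' hc hc'
          subst hcc
          have : p''.length ≤ n := by
            have : p''.length + 1 = p'.length + 1 := by simpa using hlen1
            omega
          exact ih p'' q'' x y c this hx hy hp'' hq''

lemma exists_dipath_of_root_adj {V : Type} [DecidableEq V] {G : SimpleGraph V}
    {F : Finset (V × V)} (hF : IsFacet G.Adj F) {x z : V}
    (hx : ∀ w, (w, x) ∉ F) (hadj : G.Adj x z) :
    ∃ p, IsDipath (edgeRel F) x z p := by
  by_contra h
  push_neg at h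
  have hforest : IsDirectedForest G.Adj (insert (z, x) F) := by
    refine ⟨?_, ?_, ?_⟩
    · intro e he
      rcases Finset.mem_insert.mp he with heq | hmem
      · subst heq; exact hadj.symm
      · exact hF.1.1 e hmem
    · intro a b b' hb hb'
      rcases Finset.mem_insert.mp hb with heq | hmem
      · have ha : a = x := congrArg Prod.snd heq
        have hbz : b = z := congrArg Prod.fst heq
        subst ha; subst hbz
        rcases Finset.mem_insert.mp hb' with heq' | hmem'
        · exact (congrArg Prod.fst heq').symm
        · exact absurd hmem' (hx b')
      · rcases Finset.mem_insert.mp hb' with heq' | hmem'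
        · have ha : a = x := congrArg Prod.snd heq'
          subst ha
          exact absurd hmem (hx b)
        · exact hF.1.2.1 a b b' hmem hmem'
    · intro v p hp hcyc
      rcases dipath_insert hcyc with h3 | ⟨⟨q, hq⟩, ⟨r, hr⟩⟩
      · exact hF.1.2.2 v p hp h3
      · exact h (r ++ q) (dipath_append hr hq)
  have heq := hF.2 _ hforest (Finset.subset_insert _ _)
  have : (z, x) ∈ F := heq ▸ Finset.mem_insert_self (z, x) F
  exact hx z this

/-- If `F` is a facet of the complex of directed trees of the double directed graph of a
simple graph `G`, then the set of roots of `F` (vertices with no incoming `F`-edge) is a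
strongly independent set in `G`: it is independent and neighborhoods of distinct roots
are disjoint. -/
theorem roots_of_facet_stronglyIndep {V : Type} [DecidableEq V] (G : SimpleGraph V)
    (F : Finset (V × V)) (hF : IsFacet G.Adj F) :
    (∀ x y : V, (∀ z, (z, x) ∉ F) → (∀ z, (z, y) ∉ F) → ¬ G.Adj x y) ∧
    (∀ x y : V, (∀ z, (z, x) ∉ F) → (∀ z, (z, y) ∉ F) → x ≠ y →
      Disjoint (G.neighborSet x) (G.neighborSet y)) := by
  constructor
  · intro x y hx hy hadj
    obtain ⟨p, hp⟩ := exists_dipath_of_root_adj hF hx hadj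
    rcases List.eq_nil_or_concat p with hpnil | ⟨p', d, rfl⟩
    · subst hpnil
      exact G.irrefl ((hp : x = y) ▸ hadj)
    · obtain ⟨p'', c, _, hc, _⟩ := dipath_last hp (by simp)
      exact hy c hc
  · intro x y hx hy hxy
    rw [Set.disjoint_left]
    intro z hz1 hz2
    obtain ⟨p, hp⟩ := exists_dipath_of_root_adj hF hx hz1
    obtain ⟨q, hq⟩ := exists_dipath_of_root_adj hF hy hz2
    exact hxy (root_unique hF.1.2.1 p.length p q x y z le_rfl hx hy hp hq)
end

section
/- Let D be a directed graph, v a leaf of D with unique neighbor x, such that x→v ∈ E(D) and v→x ∉ E(D). Then every facet of the complex of directed trees Δ(D) contains the edge x→v, and Δ(D) is a cone with apex x→v over Δ(D \ {v}); in particular Δ(D) is contractible. -/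
/-- The geometric realization of an abstract simplicial complex `K` on a finite vertex
set `α`: convex combinations of vertices whose support is (contained in) a face of `K`. -/
def geomRealization {α : Type} [Fintype α] (K : Finset α → Prop) : Set (α → ℝ) :=
  {f | (∀ a : α, 0 ≤ f a) ∧ (∑ a : α, f a) = 1 ∧
    ∃ F : Finset α, K F ∧ ∀ a : α, f a ≠ 0 → a ∈ F}

theorem dipath_mono' {V : Type} {T T' : V → V → Prop} (h : ∀ a b, T a b → T' a b) :
    ∀ {a b : V} {p : List V}, IsDipath T a b p → IsDipath T' a b p := by
  intro a b p
  induction p generalizing a with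
  | nil => exact id
  | cons c q ih => rintro ⟨h1, h2⟩; exact ⟨h a c h1, ih h2⟩

theorem dipath_mem' {V : Type} {T : V → V → Prop} :
    ∀ {a b w : V} {p : List V}, IsDipath T a b p → w ∈ a :: p → w = b ∨ ∃ c, T w c := by
  intro a b w p
  induction p generalizing a with
  | nil => rintro h hw; left; rw [List.mem_singleton.mp hw]; exact h
  | cons c q ih =>
    rintro ⟨h1, h2⟩ hw
    rcases List.mem_cons.mp hw with rfl | hw
    · exact Or.inr ⟨c, h1⟩
    · exact ih h2 hw

theorem dipath_erase' {V : Type} [DecidableEq V] {F : Finset (V × V)} {e : V × V} :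
    ∀ {a b : V} {p : List V}, IsDipath (edgeRel F) a b p → (∀ z ∈ p, z ≠ e.2) →
      IsDipath (edgeRel (F.erase e)) a b p := by
  intro a b p
  induction p generalizing a with
  | nil => exact fun h _ => h
  | cons c q ih =>
    rintro ⟨h1, h2⟩ hz
    refine ⟨Finset.mem_erase.mpr ⟨?_, h1⟩, ih h2 fun z hzq => hz z (List.mem_cons_of_mem _ hzq)⟩
    intro he
    exact hz c List.mem_cons_self (congrArg Prod.snd he)

/-- If no edge of `F` has source `v` and `F.erase (x, v)` has no directed cycles,
then `F` has no directed cycles. -/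
theorem no_cycle_aux {V : Type} [DecidableEq V] {F : Finset (V × V)} (v x : V)
    (hout : ∀ c : V, (v, c) ∉ F)
    (hG : ∀ (a : V) (p : List V), p ≠ [] → ¬ IsDipath (edgeRel (F.erase (x, v))) a a p)
    (a : V) (p : List V) (hp : p ≠ []) : ¬ IsDipath (edgeRel F) a a p := by
  intro hcyc
  have hv : v ∉ a :: p := by
    intro hv
    rcases dipath_mem' hcyc hv with rfl | ⟨c, hc⟩
    · -- a = v : first step leaves v
      cases p with
      | nil => exact hp rfl
      | cons c q => exact hout c hcyc.1
    · exact hout c hc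
  have hz : ∀ z ∈ p, z ≠ ((x, v) : V × V).2 := by
    intro z hzp hzv
    rw [hzv] at hzp
    exact hv (List.mem_cons_of_mem _ hzp)
  exact hG a p hp (dipath_erase' hcyc hz)

/-- Let `v` be a leaf of a digraph `E` with unique neighbor `x`, with `x → v ∈ E` and
`v → x ∉ E`.  Then every facet of `Δ(E)` contains `x → v`, and `Δ(E)` is a cone with apex
`x → v` over `Δ(E \ {v})`: the faces of `Δ(E)` are exactly the sets whose part away from
`x → v` is a face of `Δ(E \ {v})`, and one may always add the apex.  In particular the
geometric realization of `Δ(E)` is contractible. -/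
theorem cone_over_leaf {V : Type} [Fintype V] [DecidableEq V] (E : V → V → Prop) (v x : V)
    (hne : x ≠ v) (hEx : E x v) (hnE : ¬ E v x)
    (hleaf : ∀ z w : V, E z w → (z = v → w = x) ∧ (w = v → z = x)) :
    (∀ F : Finset (V × V), IsFacet E F → (x, v) ∈ F) ∧
    (∀ F : Finset (V × V), IsDirectedForest E F ↔
        IsDirectedForest (fun a b => E a b ∧ a ≠ v ∧ b ≠ v) (F.erase (x, v))) ∧
    (∀ F : Finset (V × V), IsDirectedForest E F → IsDirectedForest E (insert (x, v) F)) ∧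
    ContractibleSpace ↥(geomRealization fun F : Finset (V × V) => IsDirectedForest E F) := by
  -- Part 3 first: inserting the leaf edge keeps a forest a forest.
  have part3 : ∀ F : Finset (V × V), IsDirectedForest E F →
      IsDirectedForest E (insert (x, v) F) := by
    intro F ⟨hA, hB, hC⟩
    refine ⟨?_, ?_, ?_⟩
    · intro e he
      rcases Finset.mem_insert.mp he with rfl | he
      · exact hEx
      · exact hA e he
    · intro z y y' hy hy'
      have key : ∀ w : V, (w, z) ∈ insert (x, v) F → z = v → w = x := by
        intro w hw hz
        rcases Finset.mem_insert.mp hw with hwe | hw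
        · exact congrArg Prod.fst hwe
        · exact ((hleaf w z (hA _ hw)).2 hz)
      by_cases hz : z = v
      · rw [key y hy hz, key y' hy' hz]
      · have hy2 : (y, z) ∈ F := by
          rcases Finset.mem_insert.mp hy with hwe | h
          · exact absurd (congrArg Prod.snd hwe) hz
          · exact h
        have hy'2 : (y', z) ∈ F := by
          rcases Finset.mem_insert.mp hy' with hwe | h
          · exact absurd (congrArg Prod.snd hwe) hz
          · exact h
        exact hB z y y' hy2 hy'2
    · -- no cycles
      have hout : ∀ c : V, (v, c) ∉ insert (x, v) F := by
        intro c hc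
        rcases Finset.mem_insert.mp hc with hwe | hc
        · exact hne (congrArg Prod.fst hwe).symm
        · have := hA _ hc
          exact hnE (((hleaf v c this).1 rfl) ▸ this)
      refine no_cycle_aux v x hout ?_
      intro a p hp hcyc
      exact hC a p hp (dipath_mono' (fun a b hab =>
        Finset.mem_of_mem_insert_of_ne (Finset.mem_of_mem_erase hab)
          (Finset.ne_of_mem_erase hab)) hcyc)
  -- Part 2: forests of E ↔ forests of E \ {v} after erasing the apex.
  have part2 : ∀ F : Finset (V × V), IsDirectedForest E F ↔
      IsDirectedForest (fun a b => E a b ∧ a ≠ v ∧ b ≠ v) (F.erase (x, v)) := by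
    intro F
    constructor
    · rintro ⟨hA, hB, hC⟩
      refine ⟨?_, ?_, ?_⟩
      · intro e he
        have heF := Finset.mem_of_mem_erase he
        have hE := hA e heF
        refine ⟨hE, ?_, ?_⟩
        · intro h1
          exact hnE (((hleaf e.1 e.2 hE).1 h1) ▸ h1 ▸ hE)
        · intro h2
          exact Finset.ne_of_mem_erase he (Prod.ext ((hleaf e.1 e.2 hE).2 h2) h2)
      · intro z y y' hy hy'
        exact hB z y y' (Finset.mem_of_mem_erase hy) (Finset.mem_of_mem_erase hy')
      · intro a p hp hcyc
        exact hC a p hp (dipath_mono' (fun a b hab => Finset.mem_of_mem_erase hab) hcyc)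
    · rintro ⟨hA, hB, hC⟩
      -- every edge of F other than (x,v) avoids v
      have hmem : ∀ e ∈ F, e ≠ (x, v) → E e.1 e.2 ∧ e.1 ≠ v ∧ e.2 ≠ v := by
        intro e he hne'
        exact hA e (Finset.mem_erase.mpr ⟨hne', he⟩)
      refine ⟨?_, ?_, ?_⟩
      · intro e he
        by_cases h : e = (x, v)
        · rw [h]; exact hEx
        · exact (hmem e he h).1
      · intro z y y' hy hy'
        by_cases hz : z = v
        · have key : ∀ w : V, (w, z) ∈ F → w = x := by
            intro w hw
            by_cases h : (w, z) = (x, v)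
            · exact congrArg Prod.fst h
            · exact absurd hz (hmem _ hw h).2.2
          rw [key y hy, key y' hy']
        · have h1 : ((y, z) : V × V) ≠ (x, v) := fun h => hz (congrArg Prod.snd h)
          have h1' : ((y', z) : V × V) ≠ (x, v) := fun h => hz (congrArg Prod.snd h)
          exact hB z y y' (Finset.mem_erase.mpr ⟨h1, hy⟩) (Finset.mem_erase.mpr ⟨h1', hy'⟩)
      · have hout : ∀ c : V, (v, c) ∉ F := by
          intro c hc
          by_cases h : ((v, c) : V × V) = (x, v)
          · exact hne (congrArg Prod.fst h).symm
          · exact (hmem _ hc h).2.1 rfl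
        exact no_cycle_aux v x hout hC
  -- Part 1: facets contain the apex.
  have part1 : ∀ F : Finset (V × V), IsFacet E F → (x, v) ∈ F := by
    rintro F ⟨hF, hmax⟩
    have := hmax _ (part3 F hF) (Finset.subset_insert _ _)
    rw [← this]
    exact Finset.mem_insert_self _ _
  -- Part 4: contractibility via star convexity at the apex vertex.
  refine ⟨part1, part2, part3, ?_⟩
  set δ : (V × V) → ℝ := fun a => if a = (x, v) then 1 else 0 with hδdef
  have hempty : IsDirectedForest E (∅ : Finset (V × V)) := by
    refine ⟨fun e he => absurd he (Finset.notMem_empty e), fun z y y' hy _ => absurd hy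
      (Finset.notMem_empty _), ?_⟩
    intro a p hp hcyc
    cases p with
    | nil => exact hp rfl
    | cons c q => exact absurd hcyc.1 (Finset.notMem_empty _)
  have hδmem : δ ∈ geomRealization fun F : Finset (V × V) => IsDirectedForest E F := by
    refine ⟨fun a => ?_, ?_, ⟨{(x, v)}, ?_, ?_⟩⟩
    · by_cases h : a = (x, v) <;> simp [hδdef, h]
    · simp [hδdef]
    · have := part3 ∅ hempty
      simpa using this
    · intro a ha
      by_cases h : a = (x, v)
      · simp [h]
      · simp [hδdef, h] at ha
  have hstar : StarConvex ℝ δ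
      (geomRealization fun F : Finset (V × V) => IsDirectedForest E F) := by
    rintro f ⟨hf0, hf1, F, hF, hFsupp⟩ a b ha hb hab
    refine ⟨fun z => ?_, ?_, ⟨insert (x, v) F, part3 F hF, ?_⟩⟩
    · have : (a • δ + b • f) z = a * δ z + b * f z := by simp [smul_eq_mul]
      rw [this]
      have hδ0 : 0 ≤ δ z := by by_cases h : z = (x, v) <;> simp [hδdef, h]
      exact add_nonneg (mul_nonneg ha hδ0) (mul_nonneg hb (hf0 z))
    · have : ∑ z : V × V, (a • δ + b • f) z = a * (∑ z : V × V, δ z) + b * ∑ z : V × V, f z := by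
        simp [Finset.sum_add_distrib, Finset.mul_sum, smul_eq_mul]
      rw [this, hf1]
      have : ∑ z : V × V, δ z = 1 := by simp [hδdef]
      rw [this]
      simpa using hab
    · intro z hz
      by_cases h : z = (x, v)
      · rw [h]; exact Finset.mem_insert_self _ _
      · have hδz : δ z = 0 := by simp [hδdef, h]
        have : (a • δ + b • f) z = b * f z := by simp [smul_eq_mul, hδz]
        rw [this] at hz
        have : f z ≠ 0 := fun h' => hz (by rw [h', mul_zero])
        exact Finset.mem_insert_of_mem (hFsupp z this)
  exact hstar.contractibleSpace ⟨δ, hδmem⟩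
end
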